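/- Let Õ : [0,1) → [0,1) be the interval realization of the dyadic odometer, defined by Õ(x) = x + 3/2^n − 1 for x ∈ I_n = [(2^{n−1}−1)/2^{n−1}, (2^n−1)/2^n), n ∈ ℕ. Then the map n ↦ Õ^n(1/2) is a bijection between ℕ ∪ {0} and the set of dyadic rational numbers in (0,1): the orbit of 1/2 under Õ passes through every dyadic rational in (0,1) exactly once. -/
import Mathlib

/-- The interval realization of the dyadic odometer: `Õ(x) = x + 3/2^n − 1` on
`I_n = [(2^{n−1}−1)/2^{n−1}, (2^n−1)/2^n)`; for `x ∈ I_n` one has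
`n = Int.log 2 (1/(1−x)) + 1`. -/
noncomputable def dyadicIntervalOdometer (x : ℝ) : ℝ :=
  x + 3 / (2 : ℝ) ^ (Int.log 2 (1 / (1 - x)) + 1) - 1

private lemma intLog_eq {n : ℤ} {r : ℝ} (h0 : 0 < r) (h1 : (2:ℝ) ^ n ≤ r)
    (h2 : r < (2:ℝ) ^ (n + 1)) : Int.log 2 r = n := by
  have hb : 1 < 2 := one_lt_two
  have hle : n ≤ Int.log 2 r := by
    rw [← Int.zpow_le_iff_le_log hb h0]; exact_mod_cast h1
  have hlt : Int.log 2 r < n + 1 := by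
    rw [← Int.lt_zpow_iff_log_lt hb h0]; exact_mod_cast h2
  omega

/-- the van der Corput / bit-reversal sequence -/
noncomputable def vdC : ℕ → ℝ
  | 0 => 0
  | (n+1) => ((n+1) % 2 : ℕ) / 2 + vdC ((n+1)/2) / 2
decreasing_by exact Nat.div_lt_self (Nat.succ_pos n) one_lt_two

lemma vdC_zero : vdC 0 = 0 := by simp [vdC]

lemma vdC_rec {n : ℕ} (hn : n ≠ 0) : vdC n = (n % 2 : ℕ) / 2 + vdC (n / 2) / 2 := by
  obtain ⟨m, rfl⟩ := Nat.exists_eq_succ_of_ne_zero hn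
  rw [vdC]

lemma vdC_even (t : ℕ) : vdC (2 * t) = vdC t / 2 := by
  rcases Nat.eq_zero_or_pos t with rfl | ht
  · simp [vdC_zero]
  · rw [vdC_rec (by omega)]
    simp [Nat.mul_div_cancel_left, Nat.mul_mod_right]

lemma vdC_odd (t : ℕ) : vdC (2 * t + 1) = 1 / 2 + vdC t / 2 := by
  rw [vdC_rec (by omega)]
  have h1 : (2 * t + 1) % 2 = 1 := by omega
  have h2 : (2 * t + 1) / 2 = t := by omega
  rw [h1, h2]; norm_num

lemma vdC_mem : ∀ n : ℕ, vdC n ∈ Set.Ico (0:ℝ) 1 := by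
  intro n
  induction n using Nat.strong_induction_on with
  | _ n ih =>
    rcases Nat.eq_zero_or_pos n with rfl | hn
    · simp [vdC_zero]
    rcases Nat.even_or_odd n with ⟨t, ht⟩ | ⟨t, ht⟩
    · have h := ih t (by omega)
      subst ht
      rw [show t + t = 2 * t by ring, vdC_even]
      exact ⟨by linarith [h.1], by linarith [h.2]⟩
    · have h := ih t (by omega)
      subst ht
      rw [vdC_odd]
      constructor
      · have := h.1; positivity
      · linarith [h.2]

lemma vdC_nonneg (n : ℕ) : 0 ≤ vdC n := (vdC_mem n).1
lemma vdC_lt_one (n : ℕ) : vdC n < 1 := (vdC_mem n).2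

lemma vdC_pos : ∀ n : ℕ, n ≠ 0 → 0 < vdC n := by
  intro n
  induction n using Nat.strong_induction_on with
  | _ n ih =>
    intro hn
    rcases Nat.even_or_odd n with ⟨t, ht⟩ | ⟨t, ht⟩
    · subst ht
      have ht0 : t ≠ 0 := by omega
      have := ih t (by omega) ht0
      rw [show t + t = 2 * t by ring, vdC_even]; linarith
    · subst ht
      rw [vdC_odd]; linarith [vdC_nonneg t]

lemma vdC_injective : Function.Injective vdC := by
  intro a
  induction a using Nat.strong_induction_on with
  | _ a ih =>
    intro b hab
    rcases Nat.eq_zero_or_pos a with rfl | ha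
    · by_contra hb
      exact absurd hab.symm (ne_of_gt (by simpa [vdC_zero] using vdC_pos b (Ne.symm hb)))
    rcases Nat.eq_zero_or_pos b with rfl | hb
    · exact absurd hab (ne_of_gt (by simpa [vdC_zero] using vdC_pos a (by omega)))
    rcases Nat.even_or_odd a with ⟨s, hs⟩ | ⟨s, hs⟩ <;>
      rcases Nat.even_or_odd b with ⟨u, hu⟩ | ⟨u, hu⟩ <;> subst hs <;> subst hu
    · rw [show s + s = 2 * s by ring, show u + u = 2 * u by ring] at hab ⊢
      rw [vdC_even, vdC_even] at hab
      have : s = u := ih s (by omega) (show vdC s = vdC u by linarith)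
      omega
    · rw [show s + s = 2 * s by ring] at hab
      rw [vdC_even, vdC_odd] at hab
      have := vdC_lt_one s
      have := vdC_nonneg u
      linarith
    · rw [show u + u = 2 * u by ring] at hab
      rw [vdC_odd, vdC_even] at hab
      have := vdC_lt_one u
      have := vdC_nonneg s
      linarith
    · rw [vdC_odd, vdC_odd] at hab
      have : s = u := ih s (by omega) (show vdC s = vdC u by linarith)
      omega

/-- On `[0, 1/2)` the odometer is `x ↦ x + 1/2`. -/
lemma odometer_low {x : ℝ} (h0 : 0 ≤ x) (h1 : x < 1/2) :
    dyadicIntervalOdometer x = x + 1/2 := by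
  have hx : (0:ℝ) < 1 - x := by linarith
  have hlog : Int.log 2 (1 / (1 - x)) = 0 := by
    apply intLog_eq (by positivity)
    · rw [zpow_zero]
      rw [le_div_iff₀ hx]; linarith
    · rw [zero_add, zpow_one]
      rw [div_lt_iff₀ hx]; linarith
  unfold dyadicIntervalOdometer
  rw [hlog]
  norm_num
  ring

/-- self-similarity on the upper half: `Õ(1/2 + y/2) = Õ(y)/2` for `y ∈ [0,1)`. -/
lemma odometer_high {y : ℝ} (h0 : 0 ≤ y) (h1 : y < 1) :
    dyadicIntervalOdometer (1/2 + y/2) = dyadicIntervalOdometer y / 2 := by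
  have hy : (0:ℝ) < 1 - y := by linarith
  have key : 1 / (1 - (1/2 + y/2)) = 2 * (1 / (1 - y)) := by
    rw [show 1 - (1/2 + y/2) = (1 - y)/2 by ring]
    field_simp
  have hr : (0:ℝ) < 1 / (1 - y) := by positivity
  set n := Int.log 2 (1 / (1 - y)) with hn
  have hlog : Int.log 2 (1 / (1 - (1/2 + y/2))) = n + 1 := by
    rw [key]
    apply intLog_eq (by positivity)
    · rw [zpow_add₀ (two_ne_zero) n 1, zpow_one, mul_comm]
      have := Int.zpow_log_le_self (R := ℝ) (b := 2) one_lt_two hr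
      push_cast at this ⊢
      linarith
    · have := Int.lt_zpow_succ_log_self (R := ℝ) (b := 2) one_lt_two (1 / (1 - y))
      rw [show n + 1 + 1 = (n + 1) + 1 from rfl, zpow_add₀ (two_ne_zero) (n+1) 1, zpow_one]
      push_cast at this ⊢
      rw [mul_comm ((2:ℝ) ^ (n+1)) 2]
      linarith
  unfold dyadicIntervalOdometer
  rw [hlog, ← hn]
  rw [show n + 1 + 1 = (n + 1) + 1 from rfl, zpow_add₀ (two_ne_zero) (n+1) 1, zpow_one]
  have h2 : (0:ℝ) < (2:ℝ) ^ (n + 1) := by positivity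
  field_simp
  ring

/-- the odometer shifts the van der Corput sequence. -/
lemma odometer_vdC : ∀ n : ℕ, dyadicIntervalOdometer (vdC n) = vdC (n + 1) := by
  intro n
  induction n using Nat.strong_induction_on with
  | _ n ih =>
    rcases Nat.even_or_odd n with ⟨t, ht⟩ | ⟨t, ht⟩
    · subst ht
      rw [show t + t = 2 * t by ring, vdC_even, vdC_odd]
      rw [odometer_low (by linarith [vdC_nonneg t]) (by linarith [vdC_lt_one t])]
      ring
    · subst ht
      rw [vdC_odd, odometer_high (vdC_nonneg t) (vdC_lt_one t),
        ih t (by omega), show 2 * t + 1 + 1 = 2 * (t + 1) by ring, vdC_even]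

lemma vdC_one : vdC 1 = 1 / 2 := by
  have := vdC_odd 0
  simpa [vdC_zero] using this

lemma iterate_eq_vdC (n : ℕ) : (dyadicIntervalOdometer)^[n] (1/2 : ℝ) = vdC (n + 1) := by
  induction n with
  | zero => simp [vdC_one]
  | succ k ih => rw [Function.iterate_succ_apply', ih, odometer_vdC]

/-- every `vdC k`, `k ≥ 1`, is a dyadic rational in `(0,1)`. -/
lemma vdC_dyadic : ∀ k : ℕ, k ≠ 0 → ∃ p m : ℕ, 0 < p ∧ p < 2 ^ m ∧ vdC k = (p : ℝ) / 2 ^ m := by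
  intro k
  induction k using Nat.strong_induction_on with
  | _ k ih =>
    intro hk
    rcases Nat.even_or_odd k with ⟨t, ht⟩ | ⟨t, ht⟩
    · subst ht
      have ht0 : t ≠ 0 := by omega
      obtain ⟨p, m, hp, hpm, heq⟩ := ih t (by omega) ht0
      refine ⟨p, m + 1, hp, by push_cast; omega, ?_⟩
      rw [show t + t = 2 * t by ring, vdC_even, heq, pow_succ]
      ring
    · subst ht
      rcases Nat.eq_zero_or_pos t with rfl | ht0
      · exact ⟨1, 1, by norm_num, by norm_num, by simpa using vdC_one⟩
      obtain ⟨p, m, hp, hpm, heq⟩ := ih t (by omega) (by omega)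
      refine ⟨2 ^ m + p, m + 1, by positivity, by rw [pow_succ]; omega, ?_⟩
      rw [vdC_odd, heq]
      have : (0:ℝ) < 2 ^ m := by positivity
      push_cast
      rw [pow_succ]
      field_simp
      try ring

/-- every dyadic rational in `(0,1)` is some `vdC k`, `k ≥ 1`. -/
lemma dyadic_vdC : ∀ m p : ℕ, 0 < p → p < 2 ^ m → ∃ k : ℕ, k ≠ 0 ∧ vdC k = (p : ℝ) / 2 ^ m := by
  intro m
  induction m with
  | zero => intro p hp hpm; omega
  | succ m ih =>
    intro p hp hpm
    rcases lt_trichotomy p (2 ^ m) with h | h | h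
    · obtain ⟨k, hk, heq⟩ := ih p hp h
      refine ⟨2 * k, by omega, ?_⟩
      rw [vdC_even, heq, pow_succ]
      ring
    · refine ⟨1, one_ne_zero, ?_⟩
      rw [vdC_one, h]
      push_cast
      rw [pow_succ]
      have : (0:ℝ) < 2 ^ m := by positivity
      field_simp
    · obtain ⟨k, hk, heq⟩ := ih (p - 2 ^ m) (by omega) (by rw [pow_succ] at hpm; omega)
      refine ⟨2 * k + 1, by omega, ?_⟩
      rw [vdC_odd, heq]
      have hcast : ((p - 2 ^ m : ℕ) : ℝ) = (p : ℝ) - 2 ^ m := by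
        push_cast [Nat.cast_sub h.le]; ring
      rw [hcast, pow_succ]
      have : (0:ℝ) < 2 ^ m := by positivity
      field_simp
      try ring

/-- The map `n ↦ Õ^n(1/2)` is a bijection between `ℕ ∪ {0}` and the dyadic
rationals in `(0,1)`: the orbit of `1/2` under `Õ` passes through every dyadic
rational `p/2^m`, `0 < p < 2^m`, exactly once. -/
theorem dyadicIntervalOdometer_counts_dyadics :
    (Function.Injective fun n : ℕ => (dyadicIntervalOdometer)^[n] (1 / 2 : ℝ)) ∧
      Set.range (fun n : ℕ => (dyadicIntervalOdometer)^[n] (1 / 2 : ℝ)) =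
        {x : ℝ | ∃ p m : ℕ, 0 < p ∧ p < 2 ^ m ∧ x = (p : ℝ) / 2 ^ m} := by
  constructor
  · intro a b hab
    simp only [iterate_eq_vdC] at hab
    have := vdC_injective hab
    omega
  · ext x
    simp only [Set.mem_range, Set.mem_setOf_eq, iterate_eq_vdC]
    constructor
    · rintro ⟨n, rfl⟩
      exact vdC_dyadic (n + 1) (by omega)
    · rintro ⟨p, m, hp, hpm, rfl⟩
      obtain ⟨k, hk, heq⟩ := dyadic_vdC m p hp hpm
      exact ⟨k - 1, by rw [Nat.sub_add_cancel (by omega)]; exact heq⟩
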